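/- List-size transfer lemma: Let C be a (ρ, L)-list-decodable q-ary code of block length n, and let ρ ≤ ρ' < 1 − 1/q. Then C is (ρ', L')-list-decodable with L' ≤ L · |B_q(y, ρ'n)| / (q−1)^{ρn} for every center y; in particular L' ≤ L · q^{H_q(ρ')n} / (q−1)^{ρn}. -/

import Mathlib

/-- The q-ary entropy function. -/
noncomputable def qaryEntropy (q : ℕ) (x : ℝ) : ℝ :=
  x * Real.logb q ((q : ℝ) - 1) - x * Real.logb q x - (1 - x) * Real.logb q (1 - x)

open Finset

private lemma weight_sum (q n : ℕ) (hq : 2 ≤ q) (y : Fin n → Fin q) (p : ℝ) :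
    ∑ z : Fin n → Fin q,
      (p/((q:ℝ)-1))^(hammingDist y z) * (1-p)^(n - hammingDist y z) = 1 := by
  have hq0 : ((q:ℝ)-1) ≠ 0 := by
    have : (2:ℝ) ≤ q := by exact_mod_cast hq
    linarith
  have key : ∀ z : Fin n → Fin q,
      (p/((q:ℝ)-1))^(hammingDist y z) * (1-p)^(n - hammingDist y z)
      = ∏ i, (if y i = z i then (1-p) else p/((q:ℝ)-1)) := by
    intro z
    rw [Finset.prod_ite, Finset.prod_const, Finset.prod_const]
    have h1 : #{i | ¬ y i = z i} = hammingDist y z := rfl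
    have h2 : #({i | y i = z i} : Finset (Fin n)) = n - hammingDist y z := by
      have := Finset.card_filter_add_card_filter_not
        (s := (univ : Finset (Fin n))) (p := fun i => y i = z i)
      simp only [Finset.card_univ, Fintype.card_fin] at this
      omega
    rw [h1, h2, mul_comm]
  rw [Finset.sum_congr rfl (fun z _ => key z)]
  rw [← Fintype.piFinset_univ,
    Finset.sum_prod_piFinset univ (fun i v => if y i = v then 1 - p else p / ((q:ℝ)-1))]
  have : ∀ i : Fin n, (∑ v : Fin q, if y i = v then 1 - p else p / ((q:ℝ) - 1)) = 1 := by
    intro i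
    rw [Finset.sum_ite, Finset.sum_const, Finset.sum_const]
    have h1 : ({v | y i = v} : Finset (Fin q)) = {y i} := by
      ext v; simp [eq_comm]
    have h2 : #({v | ¬ y i = v} : Finset (Fin q)) = q - 1 := by
      have := Finset.card_filter_add_card_filter_not
        (s := (univ : Finset (Fin q))) (p := fun v => y i = v)
      simp only [Finset.card_univ, Fintype.card_fin] at this
      rw [h1] at this; simp at this; omega
    rw [h1, h2]
    have hc : ((q - 1 : ℕ) : ℝ) = (q:ℝ) - 1 := by
      have : 1 ≤ q := Nat.one_le_of_lt hq
      push_cast [this]; ring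
    simp only [Finset.card_singleton, one_smul, nsmul_eq_mul, hc]
    field_simp
    ring
  rw [Finset.prod_congr rfl (fun i _ => this i), Finset.prod_const, one_pow]

private lemma K_mul (q n : ℕ) (hq : 2 ≤ q) (p : ℝ) (hp0 : 0 < p) (hp1 : p < 1) :
    (p/((q:ℝ)-1)) ^ (p * n) * (1-p) ^ ((1-p) * n) * (q:ℝ) ^ (qaryEntropy q p * n) = 1 := by
  have hq2 : (2:ℝ) ≤ q := by exact_mod_cast hq
  have hq1 : (1:ℝ) < q := by linarith
  have hq0 : (0:ℝ) < q := by linarith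
  have hqm : (0:ℝ) < (q:ℝ) - 1 := by linarith
  have ha : (0:ℝ) < p/((q:ℝ)-1) := div_pos hp0 hqm
  have hb : (0:ℝ) < 1 - p := by linarith
  have hlq : Real.log q ≠ 0 := ne_of_gt (Real.log_pos hq1)
  set X := (p/((q:ℝ)-1)) ^ (p * n) * (1-p) ^ ((1-p) * n) * (q:ℝ) ^ (qaryEntropy q p * n)
    with hX
  have hXpos : 0 < X := by positivity
  have hlog : Real.log X = 0 := by
    rw [hX, Real.log_mul (by positivity) (by positivity),
        Real.log_mul (by positivity) (by positivity),
        Real.log_rpow ha, Real.log_rpow hb, Real.log_rpow hq0,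
        Real.log_div (ne_of_gt hp0) (ne_of_gt hqm)]
    unfold qaryEntropy
    rw [Real.logb, Real.logb, Real.logb]
    field_simp
    ring
  have := Real.exp_log hXpos
  rw [hlog, Real.exp_zero] at this
  linarith

private lemma term_lb (n d : ℕ) (a b p : ℝ) (ha : 0 < a) (hab : a ≤ b) (hb0 : 0 < b)
    (hd : (d:ℝ) ≤ p * n) (hdn : d ≤ n) (hpn : p * n ≤ n) :
    a ^ (p * n) * b ^ ((1-p) * n) ≤ a ^ d * b ^ (n - d) := by
  have hcast : ((n - d : ℕ) : ℝ) = (n:ℝ) - d := by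
    push_cast [hdn]; ring
  rw [← Real.rpow_natCast a d, ← Real.rpow_natCast b (n-d), hcast]
  have hrw : ∀ x : ℝ, x ≤ (n:ℝ) → a ^ x * b ^ ((n:ℝ) - x) = (a/b) ^ x * b ^ (n:ℝ) := by
    intro x _
    rw [Real.div_rpow (le_of_lt ha) (le_of_lt hb0), Real.rpow_sub hb0]
    field_simp
  have h1 : (1-p) * n = (n:ℝ) - p * n := by ring
  rw [h1, hrw (p*n) hpn, hrw (d:ℝ) (by exact_mod_cast hdn)]
  have hab' : a / b ≤ 1 := div_le_one_of_le₀ hab (le_of_lt hb0)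
  have := Real.rpow_le_rpow_of_exponent_ge (div_pos ha hb0) hab' hd
  have hbn : (0:ℝ) ≤ b ^ (n:ℝ) := le_of_lt (Real.rpow_pos_of_pos hb0 _)
  exact mul_le_mul_of_nonneg_right this hbn

private lemma ball_volume (q n : ℕ) (hq : 2 ≤ q) (p : ℝ) (hp0 : 0 ≤ p) (hpq : p < 1 - 1/(q:ℝ))
    (y : Fin n → Fin q) :
    ((univ.filter (fun z : Fin n → Fin q => (hammingDist y z : ℝ) ≤ p * n)).card : ℝ)
      ≤ (q:ℝ) ^ (qaryEntropy q p * n) := by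
  have hq2 : (2:ℝ) ≤ q := by exact_mod_cast hq
  have hq0 : (0:ℝ) < q := by linarith
  have hqm : (0:ℝ) < (q:ℝ) - 1 := by linarith
  have hp1 : p < 1 := by
    have : (0:ℝ) < 1/(q:ℝ) := by positivity
    linarith
  rcases eq_or_lt_of_le hp0 with h0 | hp0'
  · -- p = 0
    have hpz : p = 0 := h0.symm
    subst hpz
    have hfil : (univ.filter (fun z : Fin n → Fin q => (hammingDist y z : ℝ) ≤ 0 * n)) = {y} := by
      ext z
      simp only [Finset.mem_filter, Finset.mem_univ, true_and, Finset.mem_singleton, zero_mul]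
      constructor
      · intro h
        have : hammingDist y z = 0 := by exact_mod_cast le_antisymm (by exact_mod_cast h) (Nat.zero_le _)
        exact (eq_of_hammingDist_eq_zero this).symm
      · intro h; subst h; simp
    rw [hfil]
    have hE : qaryEntropy q 0 = 0 := by unfold qaryEntropy; simp
    rw [hE, zero_mul, Real.rpow_zero]
    simp
  · -- p > 0
    set a := p/((q:ℝ)-1) with ha_def
    set b := 1 - p with hb_def
    have ha : 0 < a := div_pos hp0' hqm
    have hb : 0 < b := by rw [hb_def]; linarith
    have hab : a ≤ b := by
      rw [ha_def, hb_def, div_le_iff₀ hqm]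
      have hpq' : p * q < q - 1 := by
        have := (mul_lt_mul_of_pos_right hpq hq0)
        have h1 : (1 - 1/(q:ℝ)) * q = q - 1 := by field_simp
        linarith
      nlinarith
    have hpn : p * n ≤ (n:ℝ) := by
      have := mul_le_mul_of_nonneg_right (le_of_lt hp1) (Nat.cast_nonneg n)
      linarith
    set B := univ.filter (fun z : Fin n → Fin q => (hammingDist y z : ℝ) ≤ p * n) with hB
    set K := a ^ (p * n) * b ^ ((1-p) * n) with hK
    have hKpos : 0 < K := by positivity
    have step1 : (B.card : ℝ) * K ≤ ∑ z ∈ B, a ^ (hammingDist y z) * b ^ (n - hammingDist y z) := by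
      have := Finset.card_nsmul_le_sum B
        (fun z => a ^ (hammingDist y z) * b ^ (n - hammingDist y z)) K ?_
      · simpa [nsmul_eq_mul] using this
      · intro z hz
        have hmem := (Finset.mem_filter.mp hz).2
        have hdn : hammingDist y z ≤ n := by
          have := hammingDist_le_card_fintype (x := y) (y := z)
          simpa using this
        exact term_lb n (hammingDist y z) a b p ha hab hb hmem hdn hpn
    have step2 : ∑ z ∈ B, a ^ (hammingDist y z) * b ^ (n - hammingDist y z)
        ≤ ∑ z : Fin n → Fin q, a ^ (hammingDist y z) * b ^ (n - hammingDist y z) := by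
      apply Finset.sum_le_sum_of_subset_of_nonneg (Finset.filter_subset _ _)
      intro z _ _
      positivity
    have step3 := weight_sum q n hq y p
    have hfinal : (B.card : ℝ) * K ≤ 1 := by
      calc (B.card : ℝ) * K ≤ _ := step1
        _ ≤ _ := step2
        _ = 1 := step3
    have hKQ := K_mul q n hq p hp0' hp1
    have : (B.card : ℝ) * K ≤ (q:ℝ) ^ (qaryEntropy q p * n) * K := by
      rw [mul_comm ((q:ℝ) ^ (qaryEntropy q p * n)) K]
      calc (B.card : ℝ) * K ≤ 1 := hfinal
        _ = K * (q:ℝ) ^ (qaryEntropy q p * n) := by rw [← hKQ]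
    exact le_of_mul_le_mul_right this hKpos

private lemma inter_ball (q n r : ℕ) (hq : 2 ≤ q) (ρ' : ℝ) (hr' : (r:ℝ) ≤ ρ' * n) (hrn : r ≤ n)
    (c y : Fin n → Fin q) (hcy : (hammingDist c y : ℝ) ≤ ρ' * n) :
    (q-1)^r ≤ ((univ.filter (fun z : Fin n → Fin q => (hammingDist y z : ℝ) ≤ ρ' * n)).filter
      (fun z => hammingDist c z ≤ r)).card := by
  classical
  set D : Finset (Fin n) := univ.filter (fun i => c i ≠ y i) with hD
  have hDcard : D.card = hammingDist c y := rfl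
  -- obtain T with #T = r and (T ∪ D).card bounded
  obtain ⟨T, hTcard, hTD⟩ : ∃ T : Finset (Fin n), T.card = r ∧ ((T ∪ D).card : ℝ) ≤ ρ' * n := by
    rcases le_or_gt r D.card with h | h
    · obtain ⟨T, hTsub, hTc⟩ := Finset.exists_subset_card_eq h
      refine ⟨T, hTc, ?_⟩
      rw [Finset.union_eq_right.mpr hTsub, hDcard]
      exact hcy
    · obtain ⟨T, hDsub, _, hTc⟩ := Finset.exists_subsuperset_card_eq (Finset.subset_univ D)
        (le_of_lt h) (by simpa using hrn)
      refine ⟨T, hTc, ?_⟩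
      rw [Finset.union_eq_left.mpr hDsub, hTc]
      exact hr'
  set Z : Finset (Fin n → Fin q) :=
    Fintype.piFinset (fun i => if i ∈ T then ({y i} : Finset (Fin q))ᶜ else {c i}) with hZ
  have hZcard : Z.card = (q-1)^r := by
    rw [hZ, Fintype.card_piFinset]
    have : ∀ i : Fin n, (if i ∈ T then ({y i} : Finset (Fin q))ᶜ else {c i}).card
        = if i ∈ T then q - 1 else 1 := by
      intro i
      by_cases h : i ∈ T <;> simp [h, Finset.card_compl]
    rw [Finset.prod_congr rfl (fun i _ => this i), Finset.prod_ite, Finset.prod_const,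
      Finset.prod_const, one_pow, mul_one]
    congr 1
    rw [Finset.filter_univ_mem]
    exact hTcard
  have hZsub : Z ⊆ (univ.filter (fun z : Fin n → Fin q => (hammingDist y z : ℝ) ≤ ρ' * n)).filter
      (fun z => hammingDist c z ≤ r) := by
    intro z hz
    rw [hZ, Fintype.mem_piFinset] at hz
    have hzT : ∀ i ∈ T, z i ≠ y i := by
      intro i hi
      have := hz i
      rw [if_pos hi] at this
      simpa using this
    have hzc : ∀ i, i ∉ T → z i = c i := by
      intro i hi
      have := hz i
      rw [if_neg hi] at this
      simpa using this
    simp only [Finset.mem_filter, Finset.mem_univ, true_and]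
    constructor
    · -- hammingDist y z ≤ (T ∪ D).card ≤ ρ'n
      have hsub : (univ.filter (fun i => y i ≠ z i)) ⊆ T ∪ D := by
        intro i hi
        simp only [Finset.mem_filter, Finset.mem_univ, true_and] at hi
        by_cases hiT : i ∈ T
        · exact Finset.mem_union_left _ hiT
        · refine Finset.mem_union_right _ ?_
          rw [hD]
          simp only [Finset.mem_filter, Finset.mem_univ, true_and]
          intro hc
          exact hi (by rw [hzc i hiT, ← hc])
      have : hammingDist y z ≤ (T ∪ D).card := Finset.card_le_card hsub
      calc (hammingDist y z : ℝ) ≤ ((T ∪ D).card : ℝ) := by exact_mod_cast this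
        _ ≤ ρ' * n := hTD
    · -- hammingDist c z ≤ r
      have hsub : (univ.filter (fun i => c i ≠ z i)) ⊆ T := by
        intro i hi
        simp only [Finset.mem_filter, Finset.mem_univ, true_and] at hi
        by_contra hiT
        exact hi (hzc i hiT).symm
      have : hammingDist c z ≤ T.card := Finset.card_le_card hsub
      omega
  calc (q-1)^r = Z.card := hZcard.symm
    _ ≤ _ := Finset.card_le_card hZsub


/-- List-size transfer lemma. -/
theorem list_size_transfer
    (q n r L : ℕ) (hq : 2 ≤ q) (ρ ρ' : ℝ)
    (C : Finset (Fin n → Fin q))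
    (hr : (r : ℝ) = ρ * n) (hρ : 0 ≤ ρ) (hρρ' : ρ ≤ ρ') (hρ'q : ρ' < 1 - 1 / q)
    (hLD : ∀ y : Fin n → Fin q,
      (C.filter (fun c => (hammingDist c y : ℝ) ≤ ρ * n)).card ≤ L) :
    ∀ y : Fin n → Fin q,
      ((C.filter (fun c => (hammingDist c y : ℝ) ≤ ρ' * n)).card : ℝ)
          ≤ (L : ℝ) * ((Finset.univ.filter (fun z : Fin n → Fin q =>
              (hammingDist y z : ℝ) ≤ ρ' * n)).card : ℝ) / ((q : ℝ) - 1) ^ r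
      ∧ ((C.filter (fun c => (hammingDist c y : ℝ) ≤ ρ' * n)).card : ℝ)
          ≤ (L : ℝ) * (q : ℝ) ^ (qaryEntropy q ρ' * n) / ((q : ℝ) - 1) ^ r := by
  intro y
  have hq2 : (2:ℝ) ≤ q := by exact_mod_cast hq
  have hq0 : (0:ℝ) < q := by linarith
  have hqm : (0:ℝ) < (q:ℝ) - 1 := by linarith
  have hρ'0 : 0 ≤ ρ' := le_trans hρ hρρ'
  have hr' : (r:ℝ) ≤ ρ' * n := by
    rw [hr]; exact mul_le_mul_of_nonneg_right hρρ' (Nat.cast_nonneg n)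
  have hρ'1 : ρ' < 1 := by
    have : (0:ℝ) < 1/(q:ℝ) := by positivity
    linarith
  have hrn : r ≤ n := by
    have h1 : (r:ℝ) ≤ (n:ℝ) := by
      calc (r:ℝ) ≤ ρ' * n := hr'
        _ ≤ 1 * n := mul_le_mul_of_nonneg_right (le_of_lt hρ'1) (Nat.cast_nonneg n)
        _ = n := one_mul _
    exact_mod_cast h1
  set S := C.filter (fun c => (hammingDist c y : ℝ) ≤ ρ' * n) with hS
  set B := univ.filter (fun z : Fin n → Fin q => (hammingDist y z : ℝ) ≤ ρ' * n) with hB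
  have inner : ∀ z : Fin n → Fin q, (S.filter (fun c => hammingDist c z ≤ r)).card ≤ L := by
    intro z
    refine le_trans (Finset.card_le_card ?_) (hLD z)
    intro c hc
    simp only [Finset.mem_filter, hS] at hc ⊢
    refine ⟨hc.1.1, ?_⟩
    rw [← hr]
    exact_mod_cast hc.2
  have count : S.card * (q-1)^r ≤ L * B.card := by
    calc S.card * (q-1)^r = ∑ _c ∈ S, (q-1)^r := by rw [Finset.sum_const, smul_eq_mul]
      _ ≤ ∑ c ∈ S, (B.filter (fun z => hammingDist c z ≤ r)).card := by
          apply Finset.sum_le_sum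
          intro c hc
          have hcy : (hammingDist c y : ℝ) ≤ ρ' * n := (Finset.mem_filter.mp hc).2
          exact inter_ball q n r hq ρ' hr' hrn c y hcy
      _ = ∑ c ∈ S, ∑ z ∈ B, if hammingDist c z ≤ r then 1 else 0 :=
          Finset.sum_congr rfl fun c _ => Finset.card_filter _ _
      _ = ∑ z ∈ B, ∑ c ∈ S, if hammingDist c z ≤ r then 1 else 0 := Finset.sum_comm
      _ = ∑ z ∈ B, (S.filter (fun c => hammingDist c z ≤ r)).card :=
          Finset.sum_congr rfl fun z _ => (Finset.card_filter _ _).symm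
      _ ≤ ∑ _z ∈ B, L := Finset.sum_le_sum (fun z _ => inner z)
      _ = B.card * L := by rw [Finset.sum_const, smul_eq_mul]
      _ = L * B.card := mul_comm _ _
  have hcast : ((q - 1 : ℕ) : ℝ) = (q:ℝ) - 1 := by
    have : 1 ≤ q := Nat.one_le_of_lt hq
    push_cast [this]; ring
  have countR : (S.card : ℝ) * ((q:ℝ)-1)^r ≤ (L:ℝ) * B.card := by
    have := count
    have h2 : ((S.card * (q-1)^r : ℕ) : ℝ) ≤ ((L * B.card : ℕ) : ℝ) := by exact_mod_cast this
    push_cast at h2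
    rw [hcast] at h2
    exact_mod_cast h2
  have hpow : (0:ℝ) < ((q:ℝ)-1)^r := by positivity
  have part1 : (S.card : ℝ) ≤ (L:ℝ) * B.card / ((q:ℝ)-1)^r := by
    rw [le_div_iff₀ hpow]
    exact countR
  refine ⟨part1, ?_⟩
  have hBvol := ball_volume q n hq ρ' hρ'0 hρ'q y
  calc (S.card : ℝ) ≤ (L:ℝ) * B.card / ((q:ℝ)-1)^r := part1
    _ ≤ (L:ℝ) * (q:ℝ) ^ (qaryEntropy q ρ' * n) / ((q:ℝ)-1)^r := by
        gcongr
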